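/- Let A ∈ M₃⊗M₃ be separable. Then A is an interior point of the convex set V₁ ∩ T[A] if and only if for every nonzero z ∈ Q[A] there exist a scalar λ > 0 and finitely many product vectors z_ι ∈ Q[A] such that A = λ zz* + ∑_ι z_ι z_ι*. -/

import Mathlib

open Matrix BigOperators
open scoped ComplexOrder

/-- Index set for `M₃ ⊗ M₃ ≅ M₉`: pairs `(i,k)` with `i,k ∈ Fin 3`. -/
abbrev Idx : Type := Fin 3 × Fin 3

/-- `M₃ ⊗ M₃`, identified with 9×9 complex matrices. -/
abbrev M9 : Type := Matrix Idx Idx ℂ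

/-- Vectors in `ℂ³ ⊗ ℂ³ ≅ ℂ⁹`. -/
abbrev V9 : Type := Idx → ℂ

/-- The product vector `x ⊗ y`, with entries `(x⊗y)(i,k) = x i * y k`. -/
def prodVec (x y : Fin 3 → ℂ) : V9 := fun p => x p.1 * y p.2

/-- Entrywise complex conjugate of a vector in `ℂ³`. -/
def conjVec (x : Fin 3 → ℂ) : Fin 3 → ℂ := fun i => (starRingEnd ℂ) (x i)

/-- The rank-one matrix `z z*`. -/
def rankOne (z : V9) : M9 := Matrix.vecMulVec z (fun p => (starRingEnd ℂ) (z p))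

/-- The partial transpose: `A^Γ((i,k),(j,l)) = A((j,k),(i,l))`. -/
def ptrans (A : M9) : M9 := fun p q => A (q.1, p.2) (p.1, q.2)

/-- The range of a matrix `A`, as a subspace of `ℂ⁹`. -/
noncomputable def MatRange (A : M9) : Submodule ℂ V9 := LinearMap.range A.mulVecLin

/-- `A` is separable: a finite sum of `(x⊗y)(x⊗y)*` over product vectors. -/
def IsSep (A : M9) : Prop :=
  ∃ (n : ℕ) (x y : Fin n → Fin 3 → ℂ),
    A = ∑ ι : Fin n, rankOne (prodVec (x ι) (y ι))

/-- The convex cone `V₁` of all separable matrices. -/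
def V1 : Set M9 := {A | IsSep A}

/-- `A` is PPT: both `A` and `A^Γ` are positive semidefinite. -/
def IsPPT (A : M9) : Prop := A.PosSemidef ∧ (ptrans A).PosSemidef

/-- The convex cone `𝕋` of all PPT matrices. -/
def Tcone : Set M9 := {A | IsPPT A}

/-- `F` is a face of the convex set `C`. -/
def IsFaceOf (F C : Set M9) : Prop :=
  F ⊆ C ∧ Convex ℝ F ∧
    ∀ x ∈ C, ∀ y ∈ C, ∀ t : ℝ, 0 < t → t < 1 →
      (1 - t) • x + t • y ∈ F → x ∈ F ∧ y ∈ F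

/-- The smallest face of `C` containing `A`. -/
def smallestFace (C : Set M9) (A : M9) : Set M9 := ⋂₀ {F | IsFaceOf F C ∧ A ∈ F}

/-- `P[A]`: product vectors `z` with `z z* ∈ V₁[A]`. -/
def Pvecs (A : M9) : Set V9 :=
  {z | (∃ x y : Fin 3 → ℂ, z = prodVec x y) ∧ rankOne z ∈ smallestFace V1 A}

/-- `Q[A]`: product vectors `x⊗y` with `x⊗y ∈ range A` and `x̄⊗y ∈ range A^Γ`. -/
def Qvecs (A : M9) : Set V9 :=
  {z | ∃ x y : Fin 3 → ℂ, z = prodVec x y ∧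
    prodVec x y ∈ MatRange A ∧ prodVec (conjVec x) y ∈ MatRange (ptrans A)}

/-- The face `𝕋[A]` of the PPT cone determined by `A`. -/
def TFace (A : M9) : Set M9 :=
  {B | IsPPT B ∧ MatRange B ≤ MatRange A ∧ MatRange (ptrans B) ≤ MatRange (ptrans A)}

/-- `x` is an interior point of the convex set `C`. -/
def IsInteriorPt (x : M9) (C : Set M9) : Prop :=
  x ∈ C ∧ ∀ y ∈ C, ∃ t : ℝ, 1 < t ∧ (1 - t) • y + t • x ∈ C

/-- The matrix `A[a,b,c]` of the paper. -/
def Amat (a b c : ℝ) : M9 := fun p q =>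
  if p = q then
    (if p.1 = p.2 then (a : ℂ) else if p.2 = p.1 + 1 then (c : ℂ) else (b : ℂ))
  else if p.1 = p.2 ∧ q.1 = q.2 then 1 else 0

lemma rankOne_mulVec (z v : V9) :
    (rankOne z) *ᵥ v = ((star z) ⬝ᵥ v) • z := by
  ext p
  simp [rankOne, Matrix.mulVec, vecMulVec_apply, dotProduct, Finset.mul_sum, mul_assoc,
    mul_comm, mul_left_comm, smul_eq_mul]

lemma rankOne_posSemidef (z : V9) : (rankOne z).PosSemidef := by
  refine Matrix.PosSemidef.of_dotProduct_mulVec_nonneg ?_ ?_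
  · ext p q
    simp [rankOne, Matrix.conjTranspose_apply, vecMulVec_apply, mul_comm]
  · intro v
    rw [rankOne_mulVec, dotProduct_smul, star_dotProduct]
    rw [smul_eq_mul]; exact star_mul_self_nonneg _

lemma ptrans_add (M N : M9) : ptrans (M + N) = ptrans M + ptrans N := rfl

lemma ptrans_smul (c : ℂ) (M : M9) : ptrans (c • M) = c • ptrans M := rfl

lemma ptrans_sum {n : ℕ} (f : Fin n → M9) :
    ptrans (∑ ι, f ι) = ∑ ι, ptrans (f ι) := by
  ext p q
  simp [ptrans, Matrix.sum_apply]

lemma ptrans_rankOne (x y : Fin 3 → ℂ) :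
    ptrans (rankOne (prodVec x y)) = rankOne (prodVec (conjVec x) y) := by
  ext p q
  simp only [ptrans, rankOne, vecMulVec_apply, prodVec, conjVec, _root_.map_mul]
  ring_nf
  simp [mul_comm, mul_left_comm, mul_assoc]

-- sums of PSD are PSD
lemma posSemidef_sum {n : ℕ} (f : Fin n → M9) (hf : ∀ ι, (f ι).PosSemidef) :
    (∑ ι, f ι).PosSemidef := by
  classical
  refine Finset.sum_induction f _ (fun a b ha hb => ha.add hb) Matrix.PosSemidef.zero
    (fun i _ => hf i)

-- membership facts for MatRange
lemma mem_matRange_iff (A : M9) (v : V9) : v ∈ MatRange A ↔ ∃ u, A *ᵥ u = v := by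
  simp [MatRange, LinearMap.mem_range, Matrix.mulVecLin_apply]

lemma matRange_rankOne_le {S : Submodule ℂ V9} {z : V9} (hz : z ∈ S) :
    MatRange (rankOne z) ≤ S := by
  rintro v ⟨u, rfl⟩
  rw [Matrix.mulVecLin_apply, rankOne_mulVec]
  exact S.smul_mem _ hz

lemma self_mem_matRange_rankOne {z : V9} (hz : z ≠ 0) : z ∈ MatRange (rankOne z) := by
  rw [mem_matRange_iff]
  refine ⟨(star z ⬝ᵥ z)⁻¹ • z, ?_⟩
  rw [Matrix.mulVec_smul, rankOne_mulVec, smul_smul, inv_mul_cancel₀, one_smul]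
  exact fun h => hz (dotProduct_star_self_eq_zero.mp h)

lemma herm_ker_sup_range (M : M9) (hM : M.IsHermitian) :
    LinearMap.ker M.mulVecLin ⊔ MatRange M = ⊤ := by
  have hdisj : LinearMap.ker M.mulVecLin ⊓ MatRange M = ⊥ := by
    rw [Submodule.eq_bot_iff]
    rintro v ⟨hk, u, rfl⟩
    rw [SetLike.mem_coe, LinearMap.mem_ker] at hk
    set v := M.mulVecLin u with hv
    have h0 : star v ⬝ᵥ v = 0 := by
      have : star v ⬝ᵥ v = star u ⬝ᵥ (Mᴴ *ᵥ v) := by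
        rw [hv, Matrix.mulVecLin_apply, Matrix.star_mulVec, ← Matrix.dotProduct_mulVec]
      rw [this, hM.eq, show M *ᵥ v = 0 from hk, dotProduct_zero]
    exact dotProduct_star_self_eq_zero.mp h0
  apply Submodule.eq_top_of_finrank_eq
  have h1 := Submodule.finrank_sup_add_finrank_inf_eq (LinearMap.ker M.mulVecLin) (MatRange M)
  rw [hdisj] at h1
  have h2 := LinearMap.finrank_range_add_finrank_ker M.mulVecLin
  simp only [finrank_bot, add_zero] at h1
  simp only [MatRange] at h1 ⊢
  rw [h1]; exact (add_comm _ _).trans h2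

lemma ker_le_of_psd_add {N P : M9} (hN : N.PosSemidef) (hP : P.PosSemidef) (v : V9)
    (hv : (N + P) *ᵥ v = 0) : N *ᵥ v = 0 := by
  have hsum : star v ⬝ᵥ (N *ᵥ v) + star v ⬝ᵥ (P *ᵥ v) = 0 := by
    rw [← dotProduct_add, ← Matrix.add_mulVec, hv, dotProduct_zero]
  have h1 := hN.dotProduct_mulVec_nonneg v
  have h2 := hP.dotProduct_mulVec_nonneg v
  have h0 : star v ⬝ᵥ (N *ᵥ v) = 0 := by
    refine le_antisymm ?_ h1
    calc star v ⬝ᵥ (N *ᵥ v) ≤ star v ⬝ᵥ (N *ᵥ v) + star v ⬝ᵥ (P *ᵥ v) :=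
          le_add_of_nonneg_right h2
      _ = 0 := hsum
  exact (hN.dotProduct_mulVec_zero_iff v).mp h0

lemma matRange_le_of_psd_add {N P : M9} (hN : N.PosSemidef) (hP : P.PosSemidef) :
    MatRange N ≤ MatRange (N + P) := by
  set M := N + P with hMdef
  have hM : M.PosSemidef := hN.add hP
  rintro v ⟨u, rfl⟩
  rw [Matrix.mulVecLin_apply]
  have htop := herm_ker_sup_range M hM.1
  have hmem : N *ᵥ u ∈ LinearMap.ker M.mulVecLin ⊔ MatRange M := htop ▸ Submodule.mem_top
  obtain ⟨k, hk, m, hm, hsum⟩ := Submodule.mem_sup.mp hmem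
  rw [LinearMap.mem_ker, Matrix.mulVecLin_apply] at hk
  have hNk : N *ᵥ k = 0 := ker_le_of_psd_add hN hP k hk
  obtain ⟨w, rfl⟩ := hm
  rw [Matrix.mulVecLin_apply] at hsum
  -- show k = 0
  have hkv : star k ⬝ᵥ (N *ᵥ u) = 0 := by
    rw [Matrix.dotProduct_mulVec, ← hN.1.eq, ← Matrix.star_mulVec, hNk]
    simp
  have hkm : star k ⬝ᵥ (M *ᵥ w) = 0 := by
    rw [Matrix.dotProduct_mulVec, ← hM.1.eq, ← Matrix.star_mulVec, hk]
    simp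
  have hkk : star k ⬝ᵥ k = 0 := by
    have hks : k = N *ᵥ u - M *ᵥ w := eq_sub_of_add_eq hsum
    calc star k ⬝ᵥ k = star k ⬝ᵥ (N *ᵥ u - M *ᵥ w) := by rw [← hks]
      _ = 0 := by rw [dotProduct_sub, hkv, hkm, sub_zero]
  have hk0 : k = 0 := dotProduct_star_self_eq_zero.mp hkk
  exact ⟨w, by rw [Matrix.mulVecLin_apply, ← hsum, hk0, zero_add]⟩

lemma posSemidef_finsetSum {κ : Type*} (s : Finset κ) (f : κ → M9)
    (hf : ∀ i ∈ s, (f i).PosSemidef) : (∑ i ∈ s, f i).PosSemidef :=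
  Finset.sum_induction f _ (fun a b ha hb => ha.add hb) Matrix.PosSemidef.zero hf

lemma mem_matRange_sum_rankOne {n : ℕ} (w : Fin n → V9) (ι : Fin n) :
    w ι ∈ MatRange (∑ κ, rankOne (w κ)) := by
  by_cases h : w ι = 0
  · rw [h]; exact Submodule.zero_mem _
  · have hsplit : (∑ κ, rankOne (w κ)) =
        rankOne (w ι) + ∑ κ ∈ Finset.univ.erase ι, rankOne (w κ) := by
      rw [← Finset.sum_erase_add _ _ (Finset.mem_univ ι), add_comm]
    rw [hsplit]
    exact matRange_le_of_psd_add (rankOne_posSemidef _)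
      (posSemidef_finsetSum _ _ (fun i _ => rankOne_posSemidef _))
      (self_mem_matRange_rankOne h)

-- Q-sums
def QSum (A M : M9) : Prop :=
  ∃ (n : ℕ) (zs : Fin n → V9), (∀ ι, zs ι ∈ Qvecs A) ∧ M = ∑ ι : Fin n, rankOne (zs ι)

lemma prodVec_smul (c : ℂ) (x y : Fin 3 → ℂ) :
    prodVec (c • x) y = c • prodVec x y := by
  ext p; simp [prodVec, mul_assoc]

lemma conjVec_smul (c : ℂ) (x : Fin 3 → ℂ) :
    conjVec (c • x) = (starRingEnd ℂ c) • conjVec x := by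
  ext i; simp [conjVec]

lemma qvecs_zero (A : M9) : (0 : V9) ∈ Qvecs A := by
  have h0 : prodVec 0 0 = 0 := by ext p; simp [prodVec]
  have h1 : conjVec 0 = 0 := by ext i; simp [conjVec]
  exact ⟨0, 0, h0.symm, by rw [h0]; exact Submodule.zero_mem _,
    by rw [h1, h0]; exact Submodule.zero_mem _⟩

lemma qvecs_smul {A : M9} {z : V9} (c : ℂ) (hz : z ∈ Qvecs A) : c • z ∈ Qvecs A := by
  obtain ⟨x, y, rfl, h1, h2⟩ := hz
  refine ⟨c • x, y, (prodVec_smul c x y).symm, ?_, ?_⟩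
  · rw [prodVec_smul]; exact Submodule.smul_mem _ _ h1
  · rw [conjVec_smul, prodVec_smul]; exact Submodule.smul_mem _ _ h2

lemma rankOne_smul_real (r : ℝ) (z : V9) :
    rankOne ((r : ℂ) • z) = (r * r : ℝ) • rankOne z := by
  ext p q
  simp only [rankOne, vecMulVec_apply, Pi.smul_apply, smul_eq_mul, _root_.map_mul,
    Matrix.smul_apply]
  simp [Complex.conj_ofReal, Complex.real_smul]
  ring

lemma real_smul_M9 (r : ℝ) (M : M9) : r • M = ((r : ℂ)) • M := by
  ext p q
  simp [Matrix.smul_apply, Complex.real_smul]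

lemma qsum_zero (A : M9) : QSum A 0 := ⟨0, fun ι => 0, fun ι => ι.elim0, by simp⟩

lemma qsum_add {A M N : M9} (hM : QSum A M) (hN : QSum A N) : QSum A (M + N) := by
  obtain ⟨m, zs, hzs, rfl⟩ := hM
  obtain ⟨n, ws, hws, rfl⟩ := hN
  refine ⟨m + n, Fin.append zs ws, ?_, ?_⟩
  · intro ι
    refine Fin.addCases (motive := fun ι => Fin.append zs ws ι ∈ Qvecs A) ?_ ?_ ι
    · intro i; rw [Fin.append_left]; exact hzs i
    · intro i; rw [Fin.append_right]; exact hws i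
  · rw [Fin.sum_univ_add]
    congr 1 <;> [skip; skip] <;> apply Finset.sum_congr rfl <;> intro i _ <;>
      simp [Fin.append_left, Fin.append_right]

lemma qsum_single {A : M9} {z : V9} (hz : z ∈ Qvecs A) : QSum A (rankOne z) :=
  ⟨1, fun _ => z, fun _ => hz, by simp⟩

lemma qsum_smul {A M : M9} {r : ℝ} (hr : 0 ≤ r) (hM : QSum A M) : QSum A (r • M) := by
  obtain ⟨n, zs, hzs, rfl⟩ := hM
  refine ⟨n, fun ι => (Real.sqrt r : ℂ) • zs ι, fun ι => qvecs_smul _ (hzs ι), ?_⟩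
  rw [Finset.smul_sum]
  apply Finset.sum_congr rfl
  intro i _
  rw [rankOne_smul_real, Real.mul_self_sqrt hr, real_smul_M9]

lemma qsum_rankOne_smul {A : M9} {z : V9} {r : ℝ} (hr : 0 ≤ r) (hz : z ∈ Qvecs A) :
    QSum A (r • rankOne z) := qsum_smul hr (qsum_single hz)

-- QSum members lie in V1 ∩ TFace A
lemma matRange_sum_rankOne_le {n : ℕ} {zs : Fin n → V9} {S : Submodule ℂ V9}
    (h : ∀ ι, zs ι ∈ S) : MatRange (∑ ι, rankOne (zs ι)) ≤ S := by
  rintro v ⟨u, rfl⟩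
  have hsum : (∑ ι, rankOne (zs ι)) *ᵥ u = ∑ ι, (rankOne (zs ι)) *ᵥ u := by
    induction (Finset.univ : Finset (Fin n)) using Finset.induction_on with
    | empty => simp [Matrix.zero_mulVec]
    | insert _ _ hx ih => simp [Finset.sum_insert hx, Matrix.add_mulVec, ih]
  rw [Matrix.mulVecLin_apply, hsum]
  exact Submodule.sum_mem _ fun ι _ => by
    rw [rankOne_mulVec]; exact S.smul_mem _ (h ι)

lemma qsum_mem {A M : M9} (h : QSum A M) : M ∈ V1 ∩ TFace A := by
  obtain ⟨n, zs, hzs, rfl⟩ := h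
  have hxy : ∀ ι, ∃ x y, zs ι = prodVec x y ∧ prodVec x y ∈ MatRange A ∧
      prodVec (conjVec x) y ∈ MatRange (ptrans A) := fun ι => hzs ι
  choose x y hxyeq hmem hmem' using hxy
  have hpt : ptrans (∑ ι, rankOne (zs ι)) = ∑ ι, rankOne (prodVec (conjVec (x ι)) (y ι)) := by
    rw [ptrans_sum]
    exact Finset.sum_congr rfl fun ι _ => by rw [hxyeq ι, ptrans_rankOne]
  refine ⟨⟨n, x, y, Finset.sum_congr rfl fun ι _ => by rw [hxyeq ι]⟩, ⟨?_, ?_⟩, ?_, ?_⟩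
  · exact posSemidef_sum _ fun ι => rankOne_posSemidef _
  · rw [hpt]; exact posSemidef_sum _ fun ι => rankOne_posSemidef _
  · exact matRange_sum_rankOne_le fun ι => (hxyeq ι) ▸ hmem ι
  · rw [hpt]; exact matRange_sum_rankOne_le hmem'

-- separable + TFace membership gives a QSum decomposition
lemma sep_TFace_qsum {A B : M9} (hB : IsSep B) (hBT : B ∈ TFace A) : QSum A B := by
  obtain ⟨n, x, y, rfl⟩ := hB
  set w : Fin n → V9 := fun ι => prodVec (x ι) (y ι) with hw
  refine ⟨n, w, ?_, rfl⟩
  intro ι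
  refine ⟨x ι, y ι, rfl, ?_, ?_⟩
  · exact hBT.2.1 (mem_matRange_sum_rankOne w ι)
  · have hpt : ptrans (∑ κ, rankOne (w κ)) = ∑ κ, rankOne (prodVec (conjVec (x κ)) (y κ)) := by
      rw [ptrans_sum]; exact Finset.sum_congr rfl fun κ _ => ptrans_rankOne _ _
    have := mem_matRange_sum_rankOne (fun κ => prodVec (conjVec (x κ)) (y κ)) ι
    rw [← hpt] at this
    exact hBT.2.2 this

lemma isSep_isPPT {A : M9} (hA : IsSep A) : IsPPT A := by
  obtain ⟨n, x, y, rfl⟩ := hA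
  constructor
  · exact posSemidef_sum _ fun ι => rankOne_posSemidef _
  · rw [ptrans_sum]
    have : ∀ ι, ptrans (rankOne (prodVec (x ι) (y ι))) =
        rankOne (prodVec (conjVec (x ι)) (y ι)) := fun ι => ptrans_rankOne _ _
    simp_rw [this]
    exact posSemidef_sum _ fun ι => rankOne_posSemidef _

lemma self_mem_TFace {A : M9} (hA : IsSep A) : A ∈ TFace A :=
  ⟨isSep_isPPT hA, le_refl _, le_refl _⟩

lemma rankOne_mem_of_qvec {A : M9} {z : V9} (hz : z ∈ Qvecs A) :
    rankOne z ∈ V1 ∩ TFace A := by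
  obtain ⟨x, y, rfl, h1, h2⟩ := hz
  refine ⟨⟨1, fun _ => x, fun _ => y, by simp⟩, ⟨?_, ?_⟩, ?_, ?_⟩
  · exact rankOne_posSemidef _
  · rw [ptrans_rankOne]; exact rankOne_posSemidef _
  · exact matRange_rankOne_le h1
  · rw [ptrans_rankOne]; exact matRange_rankOne_le h2

lemma rankOne_zero : rankOne (0 : V9) = 0 := by
  ext p q; simp [rankOne, vecMulVec_apply]

lemma qsum_finsetSum {A : M9} {κ : Type*} (s : Finset κ) (f : κ → M9)
    (hf : ∀ i ∈ s, QSum A (f i)) : QSum A (∑ i ∈ s, f i) :=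
  Finset.sum_induction f _ (fun _ _ ha hb => qsum_add ha hb) (qsum_zero A) hf

/-- For separable `A`, `A` is an interior point of `V₁ ∩ 𝕋[A]` iff
every nonzero `z ∈ Q[A]` appears (with a positive weight) in a decomposition of `A`
into rank-one projections onto vectors of `Q[A]`. -/
theorem stmt4 (A : M9) (hA : IsSep A) :
    IsInteriorPt A (V1 ∩ TFace A) ↔
      ∀ z ∈ Qvecs A, z ≠ 0 →
        ∃ l : ℝ, 0 < l ∧ ∃ (n : ℕ) (zs : Fin n → V9),
          (∀ ι, zs ι ∈ Qvecs A) ∧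
          A = (l : ℂ) • rankOne z + ∑ ι : Fin n, rankOne (zs ι) := by
  have qsumA : QSum A A := sep_TFace_qsum hA (self_mem_TFace hA)
  constructor
  · intro hint z hz _hz0
    obtain ⟨t, ht, hB⟩ := hint.2 (rankOne z) (rankOne_mem_of_qvec hz)
    have ht0 : (0:ℝ) < t := lt_trans one_pos ht
    have hQB : QSum A ((1/t) • ((1 - t) • rankOne z + t • A)) :=
      qsum_smul (by positivity) (sep_TFace_qsum hB.1 hB.2)
    obtain ⟨n, zs, hzs, hsum⟩ := hQB
    refine ⟨(t - 1)/t, div_pos (by linarith) ht0, n, zs, hzs, ?_⟩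
    rw [← real_smul_M9, ← hsum]
    match_scalars <;> field_simp <;> ring
  · intro h
    refine ⟨⟨hA, self_mem_TFace hA⟩, ?_⟩
    intro B hB
    obtain ⟨n, w, hw, rfl⟩ := sep_TFace_qsum hB.1 hB.2
    have has : ∀ ι, ∃ e : ℝ, 0 < e ∧ QSum A (A - e • rankOne (w ι)) := by
      intro ι
      by_cases h0 : w ι = 0
      · exact ⟨1, one_pos, by rw [h0, rankOne_zero, smul_zero, sub_zero]; exact qsumA⟩
      · obtain ⟨l, hl, n', zs, hzs, heq⟩ := h (w ι) (hw ι) h0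
        exact ⟨l, hl, n', zs, hzs, by rw [real_smul_M9, heq]; abel⟩
    choose ε hε hQ using has
    by_cases hn : n = 0
    · subst hn
      refine ⟨2, one_lt_two, ?_⟩
      have hB0 : (∑ ι : Fin 0, rankOne (w ι)) = 0 := by simp
      rw [hB0, smul_zero, zero_add]
      exact qsum_mem (qsum_smul (by norm_num) qsumA)
    · have hnpos : 0 < (n:ℝ) := by
        exact_mod_cast Nat.pos_of_ne_zero hn
      haveI : Nonempty (Fin n) := ⟨⟨0, Nat.pos_of_ne_zero hn⟩⟩
      set δ : ℝ := Finset.univ.inf' Finset.univ_nonempty ε with hδdef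
      have hδpos : 0 < δ := by
        rw [hδdef, Finset.lt_inf'_iff]
        exact fun i _ => hε i
      have hδle : ∀ ι, δ ≤ ε ι := fun ι =>
        Finset.inf'_le _ (Finset.mem_univ ι)
      set t : ℝ := 1 + δ/(2*n) with htdef
      have ht1 : 1 < t := by
        rw [htdef]; have : 0 < δ/(2*n) := by positivity
        linarith
      have ht0 : 0 < t := lt_trans one_pos ht1
      set c : ℝ := n*(t-1)/t with hcdef
      have hc0 : 0 ≤ c := by
        rw [hcdef]; have : 0 ≤ t - 1 := le_of_lt (by linarith)
        positivity
      have hcδ : c ≤ δ := by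
        rw [hcdef, htdef]
        rw [div_le_iff₀ (by rw [htdef] at ht0; linarith)]
        have h1 : (n:ℝ) * (1 + δ / (2 * ↑n) - 1) = δ/2 := by
          field_simp
          ring
        rw [h1]
        nlinarith [hδpos, hnpos]
      refine ⟨t, ht1, ?_⟩
      have hterm : ∀ ι, QSum A ((t/n) • (A - c • rankOne (w ι))) := by
        intro ι
        apply qsum_smul (by positivity)
        have hsplit : A - c • rankOne (w ι) =
            (A - ε ι • rankOne (w ι)) + (ε ι - c) • rankOne (w ι) := by
          rw [sub_smul]; abel
        rw [hsplit]
        exact qsum_add (hQ ι) (qsum_rankOne_smul (by linarith [hδle ι]) (hw ι))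
      have hident : (1 - t) • (∑ ι : Fin n, rankOne (w ι)) + t • A =
          ∑ ι : Fin n, (t/n) • (A - c • rankOne (w ι)) := by
        have hterm' : ∀ ι : Fin n, (t/n) • (A - c • rankOne (w ι)) =
            (t/n) • A - (t - 1) • rankOne (w ι) := by
          intro ι
          rw [smul_sub, smul_smul]
          congr 2
          rw [hcdef]
          field_simp
        simp_rw [hterm']
        rw [Finset.sum_sub_distrib, Finset.sum_const, Finset.card_univ, Fintype.card_fin,
          ← Nat.cast_smul_eq_nsmul ℝ, smul_smul, ← Finset.smul_sum]
        have hns : (n:ℝ) * (t/n) = t := by field_simp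
        rw [hns]
        module
      rw [hident]
      exact qsum_mem (qsum_finsetSum _ _ fun ι _ => hterm ι)
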